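/- For every n ≥ 3 and every k with 2 ≤ k < n, there exists a DFA B with n states that is not completely reachable and such that Γ(B) = Γ_k(B); that is, the iterative construction of Γ(B) terminates with FAILURE after exactly k steps. (The family E'_{n,k}, obtained from E_{n,k} by omitting one input letter, witnesses this.) -/

import Mathlib

/-!
Framework: complete deterministic finite automata, reachability of subsets,
defect/excluded/duplicate states of words, and the layered graphs
`Γ₁(A), Γ₂(A), …` of Bondar & Volkov, "A Characterization of Completely
Reachable Automata".
-/

/-- The action of a word on a state: `q · w`. -/
def actWord {Q σ : Type*} (δ : Q → σ → Q) (w : List σ) (q : Q) : Q :=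
  w.foldl δ q

/-- The image of a set of states under a word: `P · w`. -/
def actSet {Q σ : Type*} (δ : Q → σ → Q) (w : List σ) (P : Set Q) : Set Q :=
  actWord δ w '' P

/-- The set `excl(w) = Q \ Q·w` of excluded states of the word `w`. -/
def excl {Q σ : Type*} (δ : Q → σ → Q) (w : List σ) : Set Q :=
  Set.univ \ actSet δ w Set.univ

/-- The defect of the word `w`, i.e. `|Q \ Q·w|`. -/
noncomputable def defect {Q σ : Type*} (δ : Q → σ → Q) (w : List σ) : ℕ :=
  (excl δ w).ncard

/-- The set `dupl(w)` of duplicate states of the word `w`. -/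
def dupl {Q σ : Type*} (δ : Q → σ → Q) (w : List σ) : Set Q :=
  {p | ∃ q₁ q₂ : Q, q₁ ≠ q₂ ∧ actWord δ w q₁ = p ∧ actWord δ w q₂ = p}

/-- A subset `P ⊆ Q` is reachable if `P = Q·w` for some word `w`. -/
def reachableSubset {Q σ : Type*} (δ : Q → σ → Q) (P : Set Q) : Prop :=
  ∃ w : List σ, actSet δ w Set.univ = P

/-- A DFA is completely reachable if every nonempty subset of states is reachable. -/
def completelyReachable {Q σ : Type*} (δ : Q → σ → Q) : Prop :=
  ∀ P : Set Q, P.Nonempty → reachableSubset δ P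

/-- A directed graph given by a vertex set and an edge relation. -/
structure DGraph (V : Type*) where
  verts : Set V
  edge : V → V → Prop

/-- Reachability by a directed path in a graph. -/
def GReach {V : Type*} (G : DGraph V) : V → V → Prop :=
  Relation.ReflTransGen G.edge

/-- A graph is strongly connected if each of its vertices is reachable from
any other one. -/
def StronglyConnected {V : Type*} (G : DGraph V) : Prop :=
  ∀ u ∈ G.verts, ∀ v ∈ G.verts, GReach G u v

/-- The strongly connected component of the vertex `v`: all vertices mutually
reachable with `v`. -/
def scc {V : Type*} (G : DGraph V) (v : V) : Set V :=
  {u | u ∈ G.verts ∧ GReach G u v ∧ GReach G v u}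

/-- Vertices of the layered graphs: states (`Sum.inl`) and subsets of states
(`Sum.inr`). -/
abbrev Vtx (Q : Type*) := Q ⊕ Set Q

/-- The support of a set of vertices: the states belonging to it. -/
def support {Q : Type*} (S : Set (Vtx Q)) : Set Q :=
  {q | Sum.inl q ∈ S}

/-- The graph `Γ₁(A)`: vertices are the states, and there is an edge
`(excl w, dupl w)` for each word `w` of defect 1. -/
def Gamma1 {Q σ : Type*} (δ : Q → σ → Q) : DGraph (Vtx Q) where
  verts := Set.range Sum.inl
  edge := fun u v => ∃ q p : Q, u = Sum.inl q ∧ v = Sum.inl p ∧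
    ∃ w : List σ, defect δ w = 1 ∧ excl δ w = {q} ∧ p ∈ dupl δ w

/-- `Qnext G k`: the collection of the supports of all SCCs of `G` of rank
at least `k` (this is the set `Q_k` when `G = Γ_{k-1}(A)`). -/
def Qnext {Q : Type*} (G : DGraph (Vtx Q)) (k : ℕ) : Set (Set Q) :=
  {C | ∃ v ∈ G.verts, C = support (scc G v) ∧ k ≤ C.ncard}

/-- One step of the iterative construction: from `G = Γ_{k-1}(A)` build
`Γ_k(A)` by adding the new vertices `Q_k`, the inclusion edges `I_k`, and the
edges `E_k` enforced by words of defect `k`. -/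
def step {Q σ : Type*} (δ : Q → σ → Q) (G : DGraph (Vtx Q)) (k : ℕ) :
    DGraph (Vtx Q) where
  verts := G.verts ∪ Sum.inr '' Qnext G k
  edge := fun u v =>
    G.edge u v ∨
    (∃ C ∈ Qnext G k, v = Sum.inr C ∧
      ((∃ q : Q, u = Sum.inl q ∧ q ∈ C) ∨
       (∃ D : Set Q, u = Sum.inr D ∧ Sum.inr D ∈ G.verts ∧ D ⊂ C))) ∨
    (∃ C ∈ Qnext G k, ∃ p : Q, u = Sum.inr C ∧ v = Sum.inl p ∧
      ∃ w : List σ, defect δ w = k ∧ excl δ w ⊆ C ∧ p ∈ dupl δ w)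

/-- The layered graphs `Γ_k(A)` (with `Γ_0 := Γ_1`). -/
def Gamma {Q σ : Type*} (δ : Q → σ → Q) : ℕ → DGraph (Vtx Q)
  | 0 => Gamma1 δ
  | 1 => Gamma1 δ
  | (k + 2) => step δ (Gamma δ (k + 1)) (k + 2)

/-- The FAILURE condition at step `k`: every SCC of `Γ_k(A)` has rank at
most `k`. -/
def failsAt {Q σ : Type*} (δ : Q → σ → Q) (k : ℕ) : Prop :=
  ∀ v ∈ (Gamma δ k).verts, (support (scc (Gamma δ k) v)).ncard ≤ k

/-- The iterative construction stops at step `k` (so `Γ(A) = Γ_k(A)`):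
`k` is the first index at which `Γ_k(A)` is strongly connected (SUCCESS) or
every SCC of `Γ_k(A)` has rank at most `k` (FAILURE). -/
def stopsAt {Q σ : Type*} (δ : Q → σ → Q) (k : ℕ) : Prop :=
  1 ≤ k ∧ (StronglyConnected (Gamma δ k) ∨ failsAt δ k) ∧
    ∀ j, 1 ≤ j → j < k → ¬ StronglyConnected (Gamma δ j) ∧ ¬ failsAt δ j

namespace BVAux

variable {n k : ℕ}

/-- The "cycle" states `{0, …, k-1}` inside `Fin n`. -/
def cyc (n k : ℕ) : Set (Fin n) := {q | (q : ℕ) < k}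

/-- The transition function of the witness automaton: letter `i` maps state
`i` to `(i+1) % k` and fixes every other state. -/
def tf (hkn : k < n) : Fin n → Fin k → Fin n :=
  fun q i => if (q : ℕ) = (i : ℕ) then ⟨((i : ℕ) + 1) % k, (Nat.mod_lt _ i.pos).trans hkn⟩ else q

lemma actWord_cons {Q σ : Type*} (δ : Q → σ → Q) (a : σ) (w : List σ) (q : Q) :
    actWord δ (a :: w) q = actWord δ w (δ q a) := rfl

lemma tf_fix (hkn : k < n) (q : Fin n) (i : Fin k) (hq : k ≤ (q : ℕ)) : tf hkn q i = q := by
  unfold tf; rw [if_neg]; have := i.isLt; omega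

lemma actWord_fix (hkn : k < n) (w : List (Fin k)) (q : Fin n) (hq : k ≤ (q : ℕ)) :
    actWord (tf hkn) w q = q := by
  induction w generalizing q with
  | nil => rfl
  | cons a w ih => rw [actWord_cons, tf_fix hkn q a hq]; exact ih q hq

lemma tf_cyc (hkn : k < n) (q : Fin n) (i : Fin k) (hq : q ∈ cyc n k) :
    tf hkn q i ∈ cyc n k := by
  unfold tf; split
  · exact Nat.mod_lt _ i.pos
  · exact hq

lemma actWord_cyc (hkn : k < n) (w : List (Fin k)) (q : Fin n) (hq : q ∈ cyc n k) :
    actWord (tf hkn) w q ∈ cyc n k := by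
  induction w generalizing q with
  | nil => exact hq
  | cons a w ih => rw [actWord_cons]; exact ih _ (tf_cyc hkn q a hq)

lemma excl_sub (hkn : k < n) (w : List (Fin k)) : excl (tf hkn) w ⊆ cyc n k := by
  intro q hq
  by_contra h
  have hk : k ≤ (q : ℕ) := not_lt.mp h
  exact hq.2 ⟨q, trivial, actWord_fix hkn w q hk⟩

lemma dupl_sub (hkn : k < n) (w : List (Fin k)) : dupl (tf hkn) w ⊆ cyc n k := by
  intro p hp
  obtain ⟨q₁, q₂, hne, h1, h2⟩ := hp
  by_contra h
  have hk : k ≤ (p : ℕ) := not_lt.mp h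
  have key : ∀ q : Fin n, actWord (tf hkn) w q = p → q = p := by
    intro q hq
    by_cases hqc : q ∈ cyc n k
    · exact absurd (hq ▸ actWord_cyc hkn w q hqc) h
    · rw [← hq]; exact (actWord_fix hkn w q (not_lt.mp hqc)).symm
  exact hne ((key q₁ h1).trans (key q₂ h2).symm)

/-- Embedding of `i : Fin k` as a state. -/
def cl (hkn : k < n) (i : Fin k) : Fin n := ⟨i, i.isLt.trans hkn⟩

/-- The successor of `i` on the cycle, as a state. -/
def nx (hkn : k < n) (i : Fin k) : Fin n :=
  ⟨((i : ℕ) + 1) % k, (Nat.mod_lt _ i.pos).trans hkn⟩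

lemma nxval_ne (hk2 : 2 ≤ k) (i : Fin k) : ((i : ℕ) + 1) % k ≠ (i : ℕ) := by
  rcases Nat.lt_or_ge ((i : ℕ) + 1) k with h | h
  · rw [Nat.mod_eq_of_lt h]; omega
  · have hik := i.isLt
    have : (i : ℕ) + 1 = k := by omega
    rw [this, Nat.mod_self]; omega

lemma nx_ne (hk2 : 2 ≤ k) (hkn : k < n) (i : Fin k) : nx hkn i ≠ cl hkn i := by
  simp only [nx, cl, Ne, Fin.mk.injEq]
  exact nxval_ne hk2 i

lemma tf_cl (hkn : k < n) (i : Fin k) : tf hkn (cl hkn i) i = nx hkn i := by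
  unfold tf
  rw [if_pos (show ((cl hkn i : Fin n) : ℕ) = (i : ℕ) from rfl)]
  rfl

lemma tf_nx (hk2 : 2 ≤ k) (hkn : k < n) (i : Fin k) : tf hkn (nx hkn i) i = nx hkn i := by
  unfold tf
  rw [if_neg (show ¬ ((nx hkn i : Fin n) : ℕ) = (i : ℕ) from nxval_ne hk2 i)]

lemma excl_letter (hk2 : 2 ≤ k) (hkn : k < n) (i : Fin k) :
    excl (tf hkn) [i] = {cl hkn i} := by
  have hact : ∀ q : Fin n, actWord (tf hkn) [i] q = tf hkn q i := fun q => rfl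
  ext q
  constructor
  · intro hq
    by_contra hne
    apply hq.2
    refine ⟨q, trivial, ?_⟩
    rw [hact]
    unfold tf
    rw [if_neg]
    intro hval
    exact hne (Fin.ext hval)
  · rintro rfl
    refine ⟨trivial, ?_⟩
    rintro ⟨p, -, hp⟩
    rw [hact] at hp
    unfold tf at hp
    split at hp
    · exact nx_ne hk2 hkn i hp
    · rename_i hne
      exact hne (by rw [hp]; rfl)

lemma defect_letter (hk2 : 2 ≤ k) (hkn : k < n) (i : Fin k) :
    defect (tf hkn) [i] = 1 := by
  unfold defect
  rw [excl_letter hk2 hkn i, Set.ncard_singleton]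

lemma dupl_letter (hk2 : 2 ≤ k) (hkn : k < n) (i : Fin k) :
    nx hkn i ∈ dupl (tf hkn) [i] :=
  ⟨cl hkn i, nx hkn i, (nx_ne hk2 hkn i).symm, tf_cl hkn i, tf_nx hk2 hkn i⟩

lemma gamma1_edge (hk2 : 2 ≤ k) (hkn : k < n) (i : Fin k) :
    (Gamma1 (tf hkn)).edge (Sum.inl (cl hkn i)) (Sum.inl (nx hkn i)) :=
  ⟨cl hkn i, nx hkn i, rfl, rfl, [i], defect_letter hk2 hkn i, excl_letter hk2 hkn i,
    dupl_letter hk2 hkn i⟩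

/-- `m % k` as a state. -/
def emb (hkn : k < n) (h0 : 0 < k) (m : ℕ) : Fin n :=
  ⟨m % k, (Nat.mod_lt _ h0).trans hkn⟩

lemma emb_edge (hk2 : 2 ≤ k) (hkn : k < n) (h0 : 0 < k) (m : ℕ) :
    (Gamma1 (tf hkn)).edge (Sum.inl (emb hkn h0 m)) (Sum.inl (emb hkn h0 (m + 1))) := by
  have h := gamma1_edge hk2 hkn ⟨m % k, Nat.mod_lt _ h0⟩
  have h1 : cl hkn ⟨m % k, Nat.mod_lt _ h0⟩ = emb hkn h0 m := rfl
  have h2 : nx hkn ⟨m % k, Nat.mod_lt _ h0⟩ = emb hkn h0 (m + 1) := by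
    apply Fin.ext
    show (m % k + 1) % k = (m + 1) % k
    conv_rhs => rw [Nat.add_mod]
    rw [Nat.mod_eq_of_lt (show 1 < k by omega)]
  rwa [h1, h2] at h

lemma reach_emb (hk2 : 2 ≤ k) (hkn : k < n) (h0 : 0 < k) (m t : ℕ) :
    GReach (Gamma1 (tf hkn)) (Sum.inl (emb hkn h0 m)) (Sum.inl (emb hkn h0 (m + t))) := by
  induction t with
  | zero => exact Relation.ReflTransGen.refl
  | succ t ih => exact ih.tail (emb_edge hk2 hkn h0 (m + t))

lemma breach1 (hk2 : 2 ≤ k) (hkn : k < n) (p q : Fin n) (hp : p ∈ cyc n k) (hq : q ∈ cyc n k) :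
    GReach (Gamma1 (tf hkn)) (Sum.inl p) (Sum.inl q) := by
  have h0 : 0 < k := by omega
  have hp' : emb hkn h0 (p : ℕ) = p := Fin.ext (Nat.mod_eq_of_lt hp)
  have hq' : emb hkn h0 ((p : ℕ) + (k - (p : ℕ) + (q : ℕ))) = q := by
    apply Fin.ext
    show ((p : ℕ) + (k - (p : ℕ) + (q : ℕ))) % k = (q : ℕ)
    have h1 : (p : ℕ) + (k - (p : ℕ) + (q : ℕ)) = k + (q : ℕ) := by
      have := hp; simp only [cyc, Set.mem_setOf_eq] at this; omega
    rw [h1, Nat.add_mod_left, Nat.mod_eq_of_lt hq]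
  have := reach_emb hk2 hkn h0 (p : ℕ) (k - (p : ℕ) + (q : ℕ))
  rwa [hp', hq'] at this

lemma gamma1_edge_le (δ : Fin n → Fin k → Fin n) :
    ∀ j (u v : Vtx (Fin n)), (Gamma1 δ).edge u v → (Gamma δ j).edge u v := by
  intro j
  induction j with
  | zero => exact fun u v h => h
  | succ m ih =>
    cases m with
    | zero => exact fun u v h => h
    | succ m' => exact fun u v h => Or.inl (ih u v h)

lemma greach_mono (δ : Fin n → Fin k → Fin n) (j : ℕ) {u v : Vtx (Fin n)}
    (h : GReach (Gamma1 δ) u v) : GReach (Gamma δ j) u v :=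
  Relation.ReflTransGen.mono (gamma1_edge_le δ j) _ _ h

lemma breach (hk2 : 2 ≤ k) (hkn : k < n) (j : ℕ) (p q : Fin n)
    (hp : p ∈ cyc n k) (hq : q ∈ cyc n k) :
    GReach (Gamma (tf hkn) j) (Sum.inl p) (Sum.inl q) :=
  greach_mono _ j (breach1 hk2 hkn p q hp hq)

/-- The set of "live" vertices. -/
def Live (n k : ℕ) : Set (Vtx (Fin n)) :=
  {v | (∃ q ∈ cyc n k, v = Sum.inl q) ∨ v = Sum.inr (cyc n k)}

/-- The structural invariant of the graphs `Γ_j`. -/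
structure Inv (n k : ℕ) (hkn : k < n) (G : DGraph (Vtx (Fin n))) : Prop where
  eall : ∀ u v, G.edge u v → u ∈ Live n k ∧ v ∈ Live n k
  vsub : ∀ D : Set (Fin n), Sum.inr D ∈ G.verts → D = cyc n k
  vin : ∀ q : Fin n, Sum.inl q ∈ G.verts

lemma inv_gamma1 (hkn : k < n) : Inv n k hkn (Gamma1 (tf hkn)) where
  eall := by
    rintro u v ⟨q, p, rfl, rfl, w, -, hexcl, hdupl⟩
    constructor
    · exact Or.inl ⟨q, excl_sub hkn w (hexcl ▸ rfl), rfl⟩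
    · exact Or.inl ⟨p, dupl_sub hkn w hdupl, rfl⟩
  vsub := by rintro D ⟨q, hq⟩; exact absurd hq (by simp)
  vin := fun q => ⟨q, rfl⟩

lemma greach_out {G : DGraph (Vtx (Fin n))} {hkn : k < n}
    (hI : Inv n k hkn G) {u v : Vtx (Fin n)}
    (h : GReach G u v) (hne : u ≠ v) : u ∈ Live n k := by
  rcases Relation.ReflTransGen.cases_head h with rfl | ⟨c, hc, -⟩
  · exact absurd rfl hne
  · exact (hI.eall _ _ hc).1

lemma live_inl {p : Fin n} (h : Sum.inl p ∈ Live n k) : p ∈ cyc n k := by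
  rcases h with ⟨q, hq, heq⟩ | heq
  · cases heq; exact hq
  · cases heq

lemma qnext_eq (hk2 : 2 ≤ k) {hkn : k < n} {G : DGraph (Vtx (Fin n))}
    (hI : Inv n k hkn G)
    (hB : ∀ p q : Fin n, p ∈ cyc n k → q ∈ cyc n k → GReach G (Sum.inl p) (Sum.inl q))
    {m : ℕ} (hm : 2 ≤ m) {C : Set (Fin n)} (hC : C ∈ Qnext G m) : C = cyc n k := by
  obtain ⟨v, hv, rfl, hcard⟩ := hC
  have hnt : ∃ a ∈ support (scc G v), ∃ b ∈ support (scc G v), a ≠ b :=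
    (Set.one_lt_ncard (Set.toFinite _)).mp (by omega)
  have hsub : support (scc G v) ⊆ cyc n k := by
    intro p hp
    obtain ⟨a, ha, b, hb, hab⟩ := hnt
    obtain ⟨p', hp', hpp'⟩ : ∃ p' , p' ∈ support (scc G v) ∧ p' ≠ p := by
      by_cases h : a = p
      · exact ⟨b, hb, by rw [← h]; exact hab.symm⟩
      · exact ⟨a, ha, h⟩
    have h1 : GReach G (Sum.inl p) (Sum.inl p') := hp.2.1.trans hp'.2.2
    exact live_inl (greach_out hI h1 (by simpa using hpp'.symm))
  apply Set.Subset.antisymm hsub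
  obtain ⟨a, ha, -⟩ := hnt
  intro q hq
  exact ⟨hI.vin q, (hB q a hq (hsub ha)).trans ha.2.1, ha.2.2.trans (hB a q (hsub ha) hq)⟩

lemma inv_step (hk2 : 2 ≤ k) {hkn : k < n} {G : DGraph (Vtx (Fin n))} {j : ℕ}
    (hj : 2 ≤ j) (hI : Inv n k hkn G)
    (hB : ∀ p q : Fin n, p ∈ cyc n k → q ∈ cyc n k → GReach G (Sum.inl p) (Sum.inl q)) :
    Inv n k hkn (step (tf hkn) G j) where
  eall := by
    rintro u v (h | ⟨C, hC, rfl, h⟩ | ⟨C, hC, p, rfl, rfl, w, -, -, hdupl⟩)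
    · exact hI.eall u v h
    · have hCc : C = cyc n k := qnext_eq hk2 hI hB hj hC
      subst hCc
      rcases h with ⟨q, rfl, hq⟩ | ⟨D, rfl, hD, hDC⟩
      · exact ⟨Or.inl ⟨q, hq, rfl⟩, Or.inr rfl⟩
      · exact absurd ((hI.vsub D hD) ▸ hDC) (lt_irrefl _)
    · have hCc : C = cyc n k := qnext_eq hk2 hI hB hj hC
      subst hCc
      exact ⟨Or.inr rfl, Or.inl ⟨p, dupl_sub hkn w hdupl, rfl⟩⟩
  vsub := by
    rintro D (h | ⟨C, hC, hEq⟩)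
    · exact hI.vsub D h
    · cases hEq; exact qnext_eq hk2 hI hB hj hC
  vin := fun q => Or.inl (hI.vin q)

lemma inv_gamma (hk2 : 2 ≤ k) (hkn : k < n) :
    ∀ j, Inv n k hkn (Gamma (tf hkn) j) := by
  intro j
  induction j with
  | zero => exact inv_gamma1 hkn
  | succ m ih =>
    cases m with
    | zero => exact inv_gamma1 hkn
    | succ m' =>
      exact inv_step hk2 (by omega) ih (breach hk2 hkn (m' + 1))

lemma cyc_ncard (hkn : k < n) : (cyc n k).ncard = k := by
  have h : cyc n k = Set.range (Fin.castLE hkn.le) := by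
    ext q
    constructor
    · intro hq; exact ⟨⟨(q : ℕ), hq⟩, Fin.ext rfl⟩
    · rintro ⟨i, rfl⟩; exact i.isLt
  rw [h, ← Set.image_univ, Set.ncard_image_of_injective _ (Fin.castLE_injective _),
    Set.ncard_univ]
  simp

lemma supp_inl_cyc (hk2 : 2 ≤ k) (hkn : k < n) (j : ℕ) {q : Fin n} (hq : q ∈ cyc n k) :
    support (scc (Gamma (tf hkn) j) (Sum.inl q)) = cyc n k := by
  have hI := inv_gamma hk2 hkn j
  ext p
  constructor
  · rintro ⟨-, h1, -⟩
    by_cases hpq : p = q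
    · exact hpq ▸ hq
    · exact live_inl (greach_out hI h1 (by simpa using hpq))
  · intro hp
    exact ⟨hI.vin p, breach hk2 hkn j p q hp hq, breach hk2 hkn j q p hq hp⟩

lemma supp_le (hk2 : 2 ≤ k) (hkn : k < n) (j : ℕ) (v : Vtx (Fin n)) :
    (support (scc (Gamma (tf hkn) j) v)).ncard ≤ k := by
  have hI := inv_gamma hk2 hkn j
  rcases v with q | D
  · by_cases hq : q ∈ cyc n k
    · rw [supp_inl_cyc hk2 hkn j hq, cyc_ncard hkn]
    · have hsub : support (scc (Gamma (tf hkn) j) (Sum.inl q)) ⊆ {q} := by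
        rintro p ⟨-, -, h2⟩
        by_contra hpq
        have hne : p ≠ q := by simpa using hpq
        exact hq (live_inl (greach_out hI h2 (by simpa using hne.symm)))
      calc (support (scc (Gamma (tf hkn) j) (Sum.inl q))).ncard
          ≤ ({q} : Set (Fin n)).ncard := Set.ncard_le_ncard hsub (Set.toFinite _)
        _ = 1 := Set.ncard_singleton q
        _ ≤ k := by omega
  · have hsub : support (scc (Gamma (tf hkn) j) (Sum.inr D)) ⊆ cyc n k := by
      rintro p ⟨-, h1, -⟩
      exact live_inl (greach_out hI h1 (by simp))
    calc (support (scc (Gamma (tf hkn) j) (Sum.inr D))).ncard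
        ≤ (cyc n k).ncard := Set.ncard_le_ncard hsub (Set.toFinite _)
      _ = k := cyc_ncard hkn

lemma noout (hk2 : 2 ≤ k) (hkn : k < n) (j : ℕ) {x : Vtx (Fin n)}
    (h : GReach (Gamma (tf hkn) j) (Sum.inl (⟨k, hkn⟩ : Fin n)) x) :
    x = Sum.inl (⟨k, hkn⟩ : Fin n) := by
  rcases Relation.ReflTransGen.cases_head h with rfl | ⟨c, hc, -⟩
  · rfl
  · have hL := ((inv_gamma hk2 hkn j).eall _ _ hc).1
    have := live_inl hL
    simp only [cyc, Set.mem_setOf_eq] at this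
    omega

end BVAux


/-- for all `n ≥ 3` and `2 ≤ k < n` there is a DFA `B` with
`n` states that is not completely reachable and such that the iterative
construction of `Γ(B)` terminates with FAILURE after exactly `k` steps, i.e.
`Γ(B) = Γ_k(B)` is not strongly connected and every SCC of `Γ_k(B)` has rank
at most `k`.  (The family `E'_{n,k}` witnesses this.) -/
theorem exists_not_completely_reachable_failure_at_k
    (n k : ℕ) (hn : 3 ≤ n) (hk2 : 2 ≤ k) (hkn : k < n) :
    ∃ (σ : Type) (_ : Fintype σ) (δ : Fin n → σ → Fin n),
      ¬ completelyReachable δ ∧ stopsAt δ k ∧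
      ¬ StronglyConnected (Gamma δ k) ∧ failsAt δ k := by
  have h0k : (0 : ℕ) < k := by omega
  set q0 : Fin n := ⟨0, by omega⟩ with hq0
  set out : Fin n := ⟨k, hkn⟩ with hout
  have hq0cyc : q0 ∈ BVAux.cyc n k := h0k
  -- not strongly connected, at any level j
  have notSC : ∀ j : ℕ, ¬ StronglyConnected (Gamma (BVAux.tf hkn) j) := by
    intro j hSC
    have hI := BVAux.inv_gamma hk2 hkn j
    have h := hSC (Sum.inl out) (hI.vin out) (Sum.inl q0) (hI.vin q0)
    have := BVAux.noout hk2 hkn j h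
    simp only [hq0, hout, Sum.inl.injEq, Fin.mk.injEq] at this
    omega
  -- failure at level k
  have failsk : failsAt (BVAux.tf hkn) k := fun v _ => BVAux.supp_le hk2 hkn k v
  -- no failure before level k
  have notfails : ∀ j : ℕ, j < k → ¬ failsAt (BVAux.tf hkn) j := by
    intro j hj hf
    have hI := BVAux.inv_gamma hk2 hkn j
    have := hf (Sum.inl q0) (hI.vin q0)
    rw [BVAux.supp_inl_cyc hk2 hkn j hq0cyc, BVAux.cyc_ncard hkn] at this
    omega
  refine ⟨Fin k, inferInstance, BVAux.tf hkn, ?_, ?_, notSC k, failsk⟩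
  · -- not completely reachable
    intro h
    obtain ⟨w, hw⟩ := h {q0} ⟨q0, rfl⟩
    have hmem : out ∈ actSet (BVAux.tf hkn) w Set.univ :=
      ⟨out, trivial, BVAux.actWord_fix hkn w out le_rfl⟩
    rw [hw] at hmem
    simp only [hq0, hout, Set.mem_singleton_iff, Fin.mk.injEq] at hmem
    omega
  · exact ⟨by omega, Or.inr failsk, fun j _ hjk => ⟨notSC j, notfails j hjk⟩⟩
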